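/- If X is a dcpo, C a Scott-closed subset of X, W = { δ_x | x ∈ C } the set of Dirac valuations of points of C, and W̄ the Scott closure of W inside the dcpo of subprobability valuations on X (stochastic order), then for any y ∈ X: δ_y ∈ W̄ if and only if y ∈ C. -/
import Mathlib


/-- A set is Scott-open if it is an upper set inaccessible by suprema of
directed sets. -/
def ScottOpen {α : Type*} [Preorder α] (U : Set α) : Prop :=
  (∀ ⦃a b : α⦄, a ≤ b → a ∈ U → b ∈ U) ∧
  ∀ d : Set α, d.Nonempty → DirectedOn (· ≤ ·) d → ∀ x : α, IsLUB d x → x ∈ U →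
    (d ∩ U).Nonempty

/-- A preorder is a dcpo when every nonempty directed subset has a least upper
bound. -/
def IsDcpo (α : Type*) [Preorder α] : Prop :=
  ∀ d : Set α, d.Nonempty → DirectedOn (· ≤ ·) d → ∃ x : α, IsLUB d x

/-- A subprobability valuation on a dcpo (with its Scott topology): a
`[0,1]`-valued, strict, monotone, Scott-continuous, modular function on
Scott-open sets. -/
structure SVal (α : Type*) [Preorder α] where
  v : Set α → ℝ
  nonneg : ∀ U : Set α, ScottOpen U → 0 ≤ v U
  le_one : ∀ U : Set α, ScottOpen U → v U ≤ 1
  strict : v ∅ = 0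
  mono : ∀ ⦃U V : Set α⦄, ScottOpen U → ScottOpen V → U ⊆ V → v U ≤ v V
  cont : ∀ D : Set (Set α), (∀ U ∈ D, ScottOpen U) → D.Nonempty →
    DirectedOn (· ⊆ ·) D → v (⋃₀ D) = sSup (v '' D)
  modular : ∀ U V : Set α, ScottOpen U → ScottOpen V →
    v U + v V = v (U ∪ V) + v (U ∩ V)

/-- The stochastic order on subprobability valuations. -/
instance SVal.instPreorder {α : Type*} [Preorder α] : Preorder (SVal α) where
  le ν₁ ν₂ := ∀ U : Set α, ScottOpen U → ν₁.v U ≤ ν₂.v U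
  le_refl ν := fun _ _ => le_refl _
  le_trans ν₁ ν₂ ν₃ h₁ h₂ := fun U hU => le_trans (h₁ U hU) (h₂ U hU)

/-- The Choquet integral of `f` against the set-function `νv`:
`∫₀¹ νv (f⁻¹(t,∞)) dt`. -/
noncomputable def choquet {α : Type*} (νv : Set α → ℝ) (f : α → ℝ) : ℝ :=
  ∫ t in (0:ℝ)..1, νv (f ⁻¹' Set.Ioi t)

open Classical in
/-- The Dirac valuation of a point, as a set-function. -/
noncomputable def diracF {α : Type*} (x : α) : Set α → ℝ :=
  fun U => if x ∈ U then 1 else 0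

section Aux
variable {α : Type*} [Preorder α]

lemma scottOpen_empty : ScottOpen (∅ : Set α) :=
  ⟨fun _ _ _ h => h, fun _ _ _ _ _ h => absurd h (Set.notMem_empty _)⟩

lemma scottOpen_union {U V : Set α} (hU : ScottOpen U) (hV : ScottOpen V) :
    ScottOpen (U ∪ V) := by
  constructor
  · rintro a b hab (h | h)
    · exact Or.inl (hU.1 hab h)
    · exact Or.inr (hV.1 hab h)
  · rintro d hne hdir x hx (h | h)
    · obtain ⟨a, ha, haU⟩ := hU.2 d hne hdir x hx h
      exact ⟨a, ha, Or.inl haU⟩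
    · obtain ⟨a, ha, haV⟩ := hV.2 d hne hdir x hx h
      exact ⟨a, ha, Or.inr haV⟩

lemma scottOpen_inter {U V : Set α} (hU : ScottOpen U) (hV : ScottOpen V) :
    ScottOpen (U ∩ V) := by
  constructor
  · rintro a b hab ⟨h1, h2⟩
    exact ⟨hU.1 hab h1, hV.1 hab h2⟩
  · rintro d hne hdir x hx ⟨h1, h2⟩
    obtain ⟨a, ha, haU⟩ := hU.2 d hne hdir x hx h1
    obtain ⟨b, hb, hbV⟩ := hV.2 d hne hdir x hx h2
    obtain ⟨c, hc, hac, hbc⟩ := hdir a ha b hb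
    exact ⟨c, hc, hU.1 hac haU, hV.1 hbc hbV⟩

lemma scottOpen_sUnion {D : Set (Set α)} (hD : ∀ U ∈ D, ScottOpen U) :
    ScottOpen (⋃₀ D) := by
  constructor
  · rintro a b hab ⟨U, hUD, haU⟩
    exact ⟨U, hUD, (hD U hUD).1 hab haU⟩
  · rintro d hne hdir x hx ⟨U, hUD, hxU⟩
    obtain ⟨a, ha, haU⟩ := (hD U hUD).2 d hne hdir x hx hxU
    exact ⟨a, ha, U, hUD, haU⟩

end Aux


section Sup
variable {α : Type*} [Preorder α]

variable (d : Set (SVal α))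

lemma img_ne (hne : d.Nonempty) (U : Set α) :
    ((fun ν : SVal α => ν.v U) '' d).Nonempty := hne.image _

lemma img_bdd {U : Set α} (hU : ScottOpen U) :
    BddAbove ((fun ν : SVal α => ν.v U) '' d) := by
  refine ⟨1, ?_⟩
  rintro _ ⟨ν, _, rfl⟩
  exact ν.le_one U hU

lemma sup_add_sup (hne : d.Nonempty) (hdir : DirectedOn (· ≤ ·) d)
    {U V : Set α} (hU : ScottOpen U) (hV : ScottOpen V) :
    sSup ((fun ν : SVal α => ν.v U) '' d) + sSup ((fun ν : SVal α => ν.v V) '' d) =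
      sSup ((fun ν : SVal α => ν.v U + ν.v V) '' d) := by
  have hlub : IsLUB ((fun ν : SVal α => ν.v U + ν.v V) '' d)
      (sSup ((fun ν : SVal α => ν.v U) '' d) + sSup ((fun ν : SVal α => ν.v V) '' d)) := by
    constructor
    · rintro _ ⟨ν, hν, rfl⟩
      exact add_le_add (le_csSup (img_bdd d hU) ⟨ν, hν, rfl⟩)
        (le_csSup (img_bdd d hV) ⟨ν, hν, rfl⟩)
    · intro b hb
      have key : ∀ ν ∈ d, ∀ μ ∈ d, ν.v U + μ.v V ≤ b := by
        intro ν hν μ hμ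
        obtain ⟨ρ, hρ, hνρ, hμρ⟩ := hdir ν hν μ hμ
        calc ν.v U + μ.v V ≤ ρ.v U + ρ.v V := add_le_add (hνρ U hU) (hμρ V hV)
          _ ≤ b := hb ⟨ρ, hρ, rfl⟩
      rw [← sub_nonneg] at *
      have h1 : sSup ((fun ν : SVal α => ν.v U) '' d) ≤
          b - sSup ((fun ν : SVal α => ν.v V) '' d) := by
        apply csSup_le (img_ne d hne U)
        rintro _ ⟨ν, hν, rfl⟩
        rw [le_sub_iff_add_le, add_comm, ← le_sub_iff_add_le]
        apply csSup_le (img_ne d hne V)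
        rintro _ ⟨μ, hμ, rfl⟩
        rw [le_sub_iff_add_le, add_comm]
        exact key ν hν μ hμ
      linarith
  exact (hlub.csSup_eq (hne.image _)).symm

/-- The pointwise supremum of a nonempty directed set of valuations. -/
noncomputable def supVal (hne : d.Nonempty) (hdir : DirectedOn (· ≤ ·) d) : SVal α where
  v U := sSup ((fun ν : SVal α => ν.v U) '' d)
  nonneg U hU := Real.sSup_nonneg (by rintro _ ⟨ν, _, rfl⟩; exact ν.nonneg U hU)
  le_one U hU := csSup_le (img_ne d hne U) (by rintro _ ⟨ν, _, rfl⟩; exact ν.le_one U hU)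
  strict := by
    have himg : (fun ν : SVal α => ν.v ∅) '' d = {0} := by
      apply Set.Subset.antisymm
      · rintro _ ⟨ν, _, rfl⟩
        simp only [Set.mem_singleton_iff]
        exact ν.strict
      · rintro x hx
        obtain ⟨ν, hν⟩ := hne
        exact hx ▸ ⟨ν, hν, ν.strict⟩
    show sSup ((fun ν : SVal α => ν.v ∅) '' d) = 0
    rw [himg, csSup_singleton]
  mono U V hU hV hUV := by
    apply csSup_le (img_ne d hne U)
    rintro _ ⟨ν, hν, rfl⟩
    exact le_trans (ν.mono hU hV hUV) (le_csSup (img_bdd d hV) ⟨ν, hν, rfl⟩)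
  cont D hD hDne hDdir := by
    have hsU : ScottOpen (⋃₀ D) := scottOpen_sUnion hD
    have hlub : IsLUB ((fun U => sSup ((fun ν : SVal α => ν.v U) '' d)) '' D)
        (sSup ((fun ν : SVal α => ν.v (⋃₀ D)) '' d)) := by
      constructor
      · rintro _ ⟨U, hU, rfl⟩
        apply csSup_le (img_ne d hne U)
        rintro _ ⟨ν, hν, rfl⟩
        exact le_trans (ν.mono (hD U hU) hsU (Set.subset_sUnion_of_mem hU))
          (le_csSup (img_bdd d hsU) ⟨ν, hν, rfl⟩)
      · intro b hb
        apply csSup_le (img_ne d hne _)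
        rintro _ ⟨ν, hν, rfl⟩
        show ν.v (⋃₀ D) ≤ b
        rw [ν.cont D hD hDne hDdir]
        apply csSup_le (hDne.image _)
        rintro _ ⟨U, hU, rfl⟩
        exact le_trans (le_csSup (img_bdd d (hD U hU)) ⟨ν, hν, rfl⟩) (hb ⟨U, hU, rfl⟩)
    exact (hlub.csSup_eq (hDne.image _)).symm
  modular U V hU hV := by
    rw [sup_add_sup d hne hdir hU hV,
      sup_add_sup d hne hdir (scottOpen_union hU hV) (scottOpen_inter hU hV)]
    congr 1
    exact Set.image_congr fun ν _ => ν.modular U V hU hV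

lemma le_supVal (hne : d.Nonempty) (hdir : DirectedOn (· ≤ ·) d) :
    ∀ ν ∈ d, ν ≤ supVal d hne hdir := fun ν hν U hU =>
  le_csSup (img_bdd d hU) ⟨ν, hν, rfl⟩

end Sup


/-- Let `X` be a dcpo, `C ⊆ X` Scott-closed, `W = {δ_x | x ∈ C}` and `W̄` the
Scott closure of `W` in the dcpo of subprobability valuations on `X` with the
stochastic order.  Then `δ_y ∈ W̄` iff `y ∈ C`.  (Membership in the Scott
closure is expressed as membership in every Scott-closed superset of `W`.) -/
theorem dirac_mem_scott_closure_iff {X : Type*} [PartialOrder X]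
    (hX : IsDcpo X)
    (C : Set X) (hC : ScottOpen Cᶜ)
    (dirac : X → SVal X) (hdv : ∀ x : X, (dirac x).v = diracF x)
    (y : X) :
    (∀ T : Set (SVal X), ScottOpen Tᶜ → dirac '' C ⊆ T → dirac y ∈ T) ↔
      y ∈ C := by
  constructor
  · intro h
    set T : Set (SVal X) := {ν | ν.v Cᶜ ≤ 0} with hT
    have hTmem : ∀ ν : SVal X, ν ∈ Tᶜ ↔ 0 < ν.v Cᶜ := by
      intro ν
      simp only [hT, Set.mem_compl_iff, Set.mem_setOf_eq, not_le]
    have hTopen : ScottOpen Tᶜ := by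
      constructor
      · intro a b hab ha
        rw [hTmem] at *
        exact lt_of_lt_of_le ha (hab Cᶜ hC)
      · intro d hne hdir σ hσ hσT
        rw [hTmem] at hσT
        by_contra hcon
        rw [Set.not_nonempty_iff_eq_empty] at hcon
        have hdT : ∀ ν ∈ d, ν.v Cᶜ ≤ 0 := by
          intro ν hν
          by_contra hν'
          have : ν ∈ d ∩ Tᶜ := ⟨hν, (hTmem ν).2 (lt_of_not_ge hν')⟩
          rw [hcon] at this
          exact this
        have hτT : (supVal d hne hdir).v Cᶜ ≤ 0 := by
          apply csSup_le (img_ne d hne Cᶜ)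
          rintro _ ⟨ν, hν, rfl⟩
          exact hdT ν hν
        have hστ : σ ≤ supVal d hne hdir := hσ.2 (le_supVal d hne hdir)
        exact absurd (le_trans (hστ Cᶜ hC) hτT) (not_le_of_gt hσT)
    have hsub : dirac '' C ⊆ T := by
      rintro _ ⟨x, hx, rfl⟩
      show (dirac x).v Cᶜ ≤ 0
      rw [hdv x]
      simp [diracF, hx]
    have hy := h T hTopen hsub
    have hyv : (dirac y).v Cᶜ ≤ 0 := hy
    rw [hdv y] at hyv
    by_contra hyC
    simp [diracF, hyC] at hyv
    linarith
  · intro hy T _ hsub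
    exact hsub ⟨y, hy, rfl⟩
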